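/- Let A be a noetherian commutative ring and 𝔞 ⊆ A an ideal. If M is an 𝔞-adically complete A-module that is 𝔞-adically flat (i.e., Tor_q^A(N, M) = 0 for all 𝔞-torsion modules N and all q > 0), then M is a flat A-module. -/

import Mathlib

open CategoryTheory

universe u

section Auxiliary

open Limits TensorProduct LinearMap MonoidalCategory

variable {A : Type u} [CommRing A] {M : Type u} [AddCommGroup M] [Module A M]
variable (𝔞 : Ideal A)

/-- Key bridge: if `f : K →ₗ[A] L` is injective with `𝔞`-torsion cokernel, then
`f ⊗ id_M : K ⊗ M → L ⊗ M` is injective. -/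
theorem star_lemma
    (hflat : ∀ (N : Type u) [AddCommGroup N] [Module A N],
      (∀ x : N, ∃ k : ℕ, ∀ r ∈ 𝔞 ^ k, r • x = 0) →
      ∀ q : ℕ, 0 < q →
        Limits.IsZero (((Tor (ModuleCat.{u} A) q).obj
          (ModuleCat.of A N)).obj (ModuleCat.of A M)))
    {K L : Type u} [AddCommGroup K] [Module A K] [AddCommGroup L] [Module A L]
    (f : K →ₗ[A] L) (hf : Function.Injective f)
    (htors : ∀ x : L ⧸ LinearMap.range f, ∃ k : ℕ, ∀ r ∈ 𝔞 ^ k, r • x = 0) :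
    Function.Injective (rTensor M f) := by
  obtain ⟨P⟩ : Nonempty (ProjectiveResolution (ModuleCat.of A M)) :=
    HasProjectiveResolution.out
  -- the modules of the resolution are flat
  haveI hP : ∀ i : ℕ, Module.Flat A (P.complex.X i) := fun i => by
    haveI : Module.Projective A (P.complex.X i) :=
      (IsProjective.iff_projective (P.complex.X i)).2 (P.projective i)
    infer_instance
  -- notation
  set X0 := P.complex.X 0
  set X1 := P.complex.X 1
  set X2 := P.complex.X 2
  set d10 : X1 →ₗ[A] X0 := (P.complex.d 1 0).hom with hd10
  set d21 : X2 →ₗ[A] X1 := (P.complex.d 2 1).hom with hd21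
  set π0 : X0 →ₗ[A] M := (P.π.f 0).hom with hπ0
  -- exactness facts about the resolution
  have hπsurj : Function.Surjective π0 := by
    have : Epi (P.π.f 0) := inferInstance
    exact (ModuleCat.epi_iff_surjective _).1 this
  have hexact0 : Function.Exact d10 π0 := by
    have h := P.exact₀
    rw [ShortComplex.moduleCat_exact_iff_range_eq_ker] at h
    rw [LinearMap.exact_iff]
    exact h.symm
  have hd10π0 : π0 ∘ₗ d10 = 0 := by
    have := P.complex_d_comp_π_f_zero
    exact congrArg ModuleCat.Hom.hom this
  have hd21d10 : d10 ∘ₗ d21 = 0 := by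
    have := P.complex.d_comp_d 2 1 0
    exact congrArg ModuleCat.Hom.hom this
  -- the Tor vanishing, as concrete exactness
  set Q := L ⧸ LinearMap.range f with hQ
  have hTorExact : Function.Exact (lTensor Q d21) (lTensor Q d10) := by
    have hz := hflat Q htors 1 one_pos
    set F := (tensoringLeft (ModuleCat.{u} A)).obj (ModuleCat.of A Q) with hF
    have h1 : IsZero ((F.leftDerived 1).obj (ModuleCat.of A M)) := hz
    have h2 : IsZero ((HomologicalComplex.homologyFunctor _ _ 1).obj
        ((F.mapHomologicalComplex _).obj P.complex)) :=
      h1.of_iso (P.isoLeftDerivedObj F 1).symm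
    have h3 : ((F.mapHomologicalComplex _).obj P.complex).ExactAt 1 :=
      (HomologicalComplex.exactAt_iff_isZero_homology _ _).2 h2
    have h4 := (HomologicalComplex.exactAt_iff' _ 2 1 0 (by simp) (by simp)).1 h3
    rw [ShortComplex.moduleCat_exact_iff_range_eq_ker] at h4
    rw [LinearMap.exact_iff]
    convert h4.symm using 2
    exact Iff.rfl
  -- quotient map
  set g : L →ₗ[A] Q := Submodule.mkQ (LinearMap.range f) with hg
  have hgsurj : Function.Surjective g := Submodule.mkQ_surjective _
  have hexfg : Function.Exact f g := LinearMap.exact_map_mkQ_range f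
  have hgf : g ∘ₗ f = 0 := hexfg.linearMap_comp_eq_zero
  -- the element chase
  rw [injective_iff_map_eq_zero]
  intro x hx
  obtain ⟨x0, hx0⟩ := lTensor_surjective K hπsurj x
  have hy0 : lTensor L π0 (rTensor X0 f x0) = 0 := by
    rw [← LinearMap.comp_apply, lTensor_comp_rTensor, ← rTensor_comp_lTensor, LinearMap.comp_apply, hx0, hx]
  obtain ⟨y1, hy1⟩ := (lTensor_exact L hexact0 hπsurj _).1 hy0
  have hq1 : lTensor Q d10 (rTensor X1 g y1) = 0 := by
    rw [← LinearMap.comp_apply, lTensor_comp_rTensor, ← rTensor_comp_lTensor, LinearMap.comp_apply, hy1,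
      ← LinearMap.comp_apply, ← rTensor_comp, hgf, rTensor_zero, LinearMap.zero_apply]
  obtain ⟨q2, hq2⟩ := (hTorExact _).1 hq1
  obtain ⟨y2, hy2⟩ := rTensor_surjective X2 hgsurj q2
  set y1' := y1 - lTensor L d21 y2 with hy1'
  have hrow : rTensor X1 g y1' = 0 := by
    rw [hy1', map_sub, ← LinearMap.comp_apply, rTensor_comp_lTensor, ← lTensor_comp_rTensor,
      LinearMap.comp_apply, hy2, hq2, sub_self]
  obtain ⟨x1, hx1⟩ := (Module.Flat.rTensor_exact X1 hexfg _).1 hrow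
  have hcol : lTensor L d10 y1' = rTensor X0 f x0 := by
    rw [hy1', map_sub, hy1, ← LinearMap.comp_apply, ← lTensor_comp, hd21d10, lTensor_zero, LinearMap.zero_apply,
      sub_zero]
  have hx0eq : lTensor K d10 x1 = x0 := by
    apply Module.Flat.rTensor_preserves_injective_linearMap (M := X0) f hf
    rw [← LinearMap.comp_apply, rTensor_comp_lTensor, ← lTensor_comp_rTensor, LinearMap.comp_apply, hx1, hcol]
  rw [← hx0, ← hx0eq, ← LinearMap.comp_apply, ← lTensor_comp, hd10π0, lTensor_zero, LinearMap.zero_apply]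

section Pi

variable (I : Ideal A)

lemma mem_smul_top_pi {r : ℕ} (x : Fin r → M) :
    x ∈ (I • ⊤ : Submodule A (Fin r → M)) ↔ ∀ i, x i ∈ (I • ⊤ : Submodule A M) := by
  constructor
  · intro hx i
    have hmap := Submodule.map_smul'' I (⊤ : Submodule A (Fin r → M))
      (LinearMap.proj (R := A) (φ := fun _ : Fin r => M) i)
    have hm : x i ∈ Submodule.map (LinearMap.proj (R := A) (φ := fun _ : Fin r => M) i)
        (I • ⊤ : Submodule A (Fin r → M)) := ⟨x, hx, rfl⟩
    rw [hmap] at hm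
    exact (smul_mono_right _ le_top : I • Submodule.map _ ⊤ ≤ _) hm
  · intro h
    have hx : x = ∑ i, Pi.single i (x i) := (Finset.univ_sum_single x).symm
    rw [hx]
    refine Submodule.sum_mem _ fun i _ => ?_
    have hmap := Submodule.map_smul'' I (⊤ : Submodule A M)
      (LinearMap.single A (fun _ : Fin r => M) i)
    have : Pi.single i (x i) ∈ Submodule.map (LinearMap.single A (fun _ : Fin r => M) i)
        (I • ⊤ : Submodule A M) := ⟨x i, h i, rfl⟩
    rw [hmap] at this
    exact (smul_mono_right _ le_top : I • Submodule.map _ ⊤ ≤ _) this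

variable (𝔞 : Ideal A)

lemma pi_isAdicComplete {r : ℕ} (hc : IsAdicComplete 𝔞 M) :
    IsAdicComplete 𝔞 (Fin r → M) := by
  refine { haus' := fun x hx => ?_, prec' := fun f hf => ?_ }
  · funext i
    refine hc.haus' (x i) fun n => ?_
    have := hx n
    rw [SModEq.sub_mem, sub_zero] at this ⊢
    exact (mem_smul_top_pi _ x).1 this i
  · have hcau : ∀ i, ∃ L : M, ∀ n, (fun n => f n i) n ≡ L [SMOD (𝔞 ^ n • ⊤ : Submodule A M)] := by
      intro i
      refine hc.prec' _ fun {m n} hmn => ?_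
      have := hf hmn
      rw [SModEq.sub_mem] at this ⊢
      exact (mem_smul_top_pi _ _).1 this i
    choose L hL using hcau
    refine ⟨L, fun n => ?_⟩
    rw [SModEq.sub_mem]
    rw [mem_smul_top_pi]
    intro i
    have := hL i n
    rwa [SModEq.sub_mem] at this

end Pi

section Tors

variable (𝔞 : Ideal A)

lemma smul_quot_tensor_eq_zero {V : Type u} [AddCommGroup V] [Module A V] (I : Ideal A)
    {a : A} (ha : a ∈ I) (z : (V ⧸ (I • ⊤ : Submodule A V)) ⊗[A] M) : a • z = 0 := by
  induction z using TensorProduct.induction_on with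
  | zero => simp
  | tmul q m =>
    obtain ⟨v, rfl⟩ := Submodule.mkQ_surjective _ q
    rw [smul_tmul']
    have hq : a • (Submodule.mkQ (I • ⊤ : Submodule A V) v) = 0 := by
      rw [← map_smul, Submodule.mkQ_apply, Submodule.Quotient.mk_eq_zero]
      exact Submodule.smul_mem_smul ha trivial
    rw [hq, zero_tmul]
  | add x y hx hy => rw [smul_add, hx, hy, add_zero]

lemma rTensor_mkQ_eq_zero_of_mem {V : Type u} [AddCommGroup V] [Module A V] (I : Ideal A)
    {t : V ⊗[A] M} (ht : t ∈ (I • ⊤ : Submodule A (V ⊗[A] M))) :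
    rTensor M (Submodule.mkQ (I • ⊤ : Submodule A V)) t = 0 := by
  refine Submodule.smul_induction_on ht (fun a ha u _ => ?_)
    (fun x y hx hy => by rw [map_add, hx, hy, add_zero])
  rw [map_smul]
  exact smul_quot_tensor_eq_zero (I := I) ha _

lemma range_rTensor_inclusion_le {V : Type u} [AddCommGroup V] [Module A V]
    {D E S : Submodule A V} (I : Ideal A) (hDE : D ≤ E) (hS : S ≤ I • D) (hSE : S ≤ E)
    (t : (↥S) ⊗[A] M) :
    rTensor M (Submodule.inclusion hSE) t ∈ (I • ⊤ : Submodule A ((↥E) ⊗[A] M)) := by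
  induction t using TensorProduct.induction_on with
  | zero => simp
  | add x y hx hy => rw [map_add]; exact add_mem hx hy
  | tmul s m =>
    have hmem : (s : V) ∈ I • D := hS s.2
    have H : ∀ v ∈ I • D, ∃ hv : v ∈ E,
        ((⟨v, hv⟩ : E) ⊗ₜ[A] m) ∈ (I • ⊤ : Submodule A ((↥E) ⊗[A] M)) := by
      intro v hv
      refine Submodule.smul_induction_on hv ?_ ?_
      · intro a ha d hd
        refine ⟨E.smul_mem a (hDE hd), ?_⟩
        have h1 : (⟨a • d, E.smul_mem a (hDE hd)⟩ : E) = a • (⟨d, hDE hd⟩ : E) := rfl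
        rw [h1, ← smul_tmul']
        exact Submodule.smul_mem_smul ha trivial
      · rintro v w ⟨hv1, hv2⟩ ⟨hw1, hw2⟩
        refine ⟨add_mem hv1 hw1, ?_⟩
        have h2 : (⟨v + w, add_mem hv1 hw1⟩ : E) = (⟨v, hv1⟩ : E) + (⟨w, hw1⟩ : E) := rfl
        rw [h2, add_tmul]
        exact add_mem hv2 hw2
    obtain ⟨hv, h⟩ := H s hmem
    rw [rTensor_tmul]
    have : Submodule.inclusion hSE s = (⟨(s : V), hv⟩ : E) := rfl
    rw [this]
    exact h

end Tors

lemma mem_range_rTensor_inf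
    (hflat : ∀ (N : Type u) [AddCommGroup N] [Module A N],
      (∀ x : N, ∃ k : ℕ, ∀ r ∈ 𝔞 ^ k, r • x = 0) →
      ∀ q : ℕ, 0 < q →
        Limits.IsZero (((Tor (ModuleCat.{u} A) q).obj
          (ModuleCat.of A N)).obj (ModuleCat.of A M)))
    {V : Type u} [AddCommGroup V] [Module A V] (E : Submodule A V) (N : ℕ)
    {x : (↥E) ⊗[A] M}
    (hx : rTensor M E.subtype x ∈ (𝔞 ^ N • ⊤ : Submodule A (V ⊗[A] M))) :
    x ∈ Set.range (rTensor M (Submodule.inclusion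
      (inf_le_left : E ⊓ (𝔞 ^ N • ⊤ : Submodule A V) ≤ E))) := by
  set S : Submodule A V := E ⊓ (𝔞 ^ N • ⊤ : Submodule A V) with hSdef
  set ι : ↥S →ₗ[A] ↥E := Submodule.inclusion inf_le_left with hι
  have hle : LinearMap.range ι ≤
      LinearMap.ker ((Submodule.mkQ (𝔞 ^ N • ⊤ : Submodule A V)) ∘ₗ E.subtype) := by
    rintro _ ⟨t, rfl⟩
    have : ((ι t : ↥E) : V) ∈ (𝔞 ^ N • ⊤ : Submodule A V) := t.2.2
    simp only [mem_ker, LinearMap.comp_apply, Submodule.subtype_apply, Submodule.mkQ_apply,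
      Submodule.Quotient.mk_eq_zero]
    exact this
  set fbar : (↥E ⧸ LinearMap.range ι) →ₗ[A] (V ⧸ (𝔞 ^ N • ⊤ : Submodule A V)) :=
    Submodule.liftQ _ _ hle with hfbar
  have hfbar_inj : Function.Injective fbar := by
    rw [← ker_eq_bot]
    apply Submodule.ker_liftQ_eq_bot
    intro e he
    rw [mem_ker, LinearMap.comp_apply, Submodule.mkQ_apply, Submodule.Quotient.mk_eq_zero] at he
    exact ⟨⟨(e : V), ⟨e.2, he⟩⟩, rfl⟩
  have htors : ∀ z : (V ⧸ (𝔞 ^ N • ⊤ : Submodule A V)) ⧸ LinearMap.range fbar,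
      ∃ k : ℕ, ∀ a ∈ 𝔞 ^ k, a • z = 0 := by
    intro z
    refine ⟨N, fun a ha => ?_⟩
    obtain ⟨w, rfl⟩ := Submodule.mkQ_surjective _ z
    rw [← map_smul]
    obtain ⟨v, rfl⟩ := Submodule.mkQ_surjective _ w
    have : a • (Submodule.mkQ (𝔞 ^ N • ⊤ : Submodule A V) v) = 0 := by
      rw [← map_smul, Submodule.mkQ_apply, Submodule.Quotient.mk_eq_zero]
      exact Submodule.smul_mem_smul ha trivial
    rw [this, map_zero]
  have hinj := star_lemma 𝔞 hflat fbar hfbar_inj htors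
  have hcomm : fbar ∘ₗ Submodule.mkQ (LinearMap.range ι) =
      (Submodule.mkQ (𝔞 ^ N • ⊤ : Submodule A V)) ∘ₗ E.subtype :=
    Submodule.liftQ_mkQ _ _ _
  have h0 : rTensor M (Submodule.mkQ (LinearMap.range ι)) x = 0 := by
    apply hinj
    rw [map_zero, ← LinearMap.comp_apply, ← rTensor_comp, hcomm, rTensor_comp,
      LinearMap.comp_apply]
    exact rTensor_mkQ_eq_zero_of_mem (I := 𝔞 ^ N) hx
  exact (rTensor_exact M (LinearMap.exact_map_mkQ_range ι) (Submodule.mkQ_surjective _) x).1 h0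

lemma closed_range {r s : ℕ} (hc : IsAdicComplete 𝔞 M)
    (ψ : (Fin s → M) →ₗ[A] (Fin r → M)) (c : ℕ)
    (hψ : ∀ n : ℕ, (LinearMap.range ψ ⊓ (𝔞 ^ (n + c) • ⊤) : Submodule A (Fin r → M)) ≤
      Submodule.map ψ (𝔞 ^ n • ⊤ : Submodule A (Fin s → M)))
    {x : Fin r → M}
    (hx : ∀ n : ℕ, x ∈ (LinearMap.range ψ ⊔ (𝔞 ^ n • ⊤) : Submodule A (Fin r → M))) :
    x ∈ LinearMap.range ψ := by
  have hcs : IsAdicComplete 𝔞 (Fin s → M) := pi_isAdicComplete 𝔞 hc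
  have hcr : IsAdicComplete 𝔞 (Fin r → M) := pi_isAdicComplete 𝔞 hc
  have key : ∀ n : ℕ, ∃ v : Fin s → M,
      x - ψ v ∈ (𝔞 ^ (n + c) • ⊤ : Submodule A (Fin r → M)) := by
    intro n
    have h := hx (n + c)
    rw [Submodule.mem_sup] at h
    obtain ⟨w, ⟨u, rfl⟩, z, hz, rfl⟩ := h
    exact ⟨u, by simpa using hz⟩
  have step : ∀ (n : ℕ) (vn : Fin s → M),
      x - ψ vn ∈ (𝔞 ^ (n + c) • ⊤ : Submodule A (Fin r → M)) →
      ∃ v', x - ψ v' ∈ (𝔞 ^ (n + 1 + c) • ⊤ : Submodule A (Fin r → M)) ∧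
        v' - vn ∈ (𝔞 ^ n • ⊤ : Submodule A (Fin s → M)) := by
    intro n vn hvn
    obtain ⟨u, hu⟩ := key (n + 1)
    have hw : ψ u - ψ vn ∈
        (LinearMap.range ψ ⊓ (𝔞 ^ (n + c) • ⊤) : Submodule A (Fin r → M)) := by
      refine ⟨⟨u - vn, map_sub ψ u vn⟩, ?_⟩
      have h1 : ψ u - ψ vn = (x - ψ vn) - (x - ψ u) := by abel
      rw [h1]
      refine sub_mem hvn ?_
      exact Submodule.smul_mono_left (Ideal.pow_le_pow_right (by omega)) hu
    obtain ⟨δ, hδ, hδeq⟩ := hψ n hw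
    refine ⟨vn + δ, ?_, by simpa using hδ⟩
    rw [map_add, hδeq]
    have h2 : x - (ψ vn + (ψ u - ψ vn)) = x - ψ u := by abel
    rw [h2]
    exact hu
  obtain ⟨v₀, hv₀⟩ := key 0
  let Fn : (n : ℕ) → {v : Fin s → M //
      x - ψ v ∈ (𝔞 ^ (n + c) • ⊤ : Submodule A (Fin r → M))} :=
    fun n => Nat.rec ⟨v₀, hv₀⟩
      (fun k p => ⟨Classical.choose (step k p.1 p.2),
        (Classical.choose_spec (step k p.1 p.2)).1⟩) n
  have hdiff : ∀ n : ℕ, (Fn (n + 1)).1 - (Fn n).1 ∈ (𝔞 ^ n • ⊤ : Submodule A (Fin s → M)) :=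
    fun n => (Classical.choose_spec (step n (Fn n).1 (Fn n).2)).2
  have hcauchy : ∀ {m n : ℕ}, m ≤ n →
      (fun k => (Fn k).1) m ≡ (fun k => (Fn k).1) n
        [SMOD (𝔞 ^ m • ⊤ : Submodule A (Fin s → M))] := by
    intro m n hmn
    rw [SModEq.sub_mem]
    induction n, hmn using Nat.le_induction with
    | base => simp
    | succ n hmn ih =>
      have h1 : (Fn m).1 - (Fn (n + 1)).1 =
          ((Fn m).1 - (Fn n).1) - ((Fn (n + 1)).1 - (Fn n).1) := by abel
      rw [h1]
      exact sub_mem ih (Submodule.smul_mono_left (Ideal.pow_le_pow_right hmn) (hdiff n))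
  obtain ⟨Lv, hLv⟩ := hcs.prec' _ @hcauchy
  refine ⟨Lv, ?_⟩
  have hzero : x - ψ Lv = 0 := by
    refine hcr.haus' _ fun n => ?_
    rw [SModEq.sub_mem, sub_zero]
    have h1 : x - ψ Lv = (x - ψ (Fn n).1) + ψ ((Fn n).1 - Lv) := by
      rw [map_sub]; abel
    rw [h1]
    refine add_mem (Submodule.smul_mono_left (Ideal.pow_le_pow_right (by omega)) (Fn n).2) ?_
    have h2 : (Fn n).1 - Lv ∈ (𝔞 ^ n • ⊤ : Submodule A (Fin s → M)) := by
      have := hLv n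
      rw [SModEq.sub_mem] at this
      exact this
    have h3 : ψ ((Fn n).1 - Lv) ∈ Submodule.map ψ (𝔞 ^ n • ⊤ : Submodule A (Fin s → M)) :=
      ⟨_, h2, rfl⟩
    rw [Submodule.map_smul''] at h3
    exact (smul_mono_right _ le_top : 𝔞 ^ n • Submodule.map ψ ⊤ ≤ _) h3
  have := sub_eq_zero.1 hzero
  exact this.symm

end Auxiliary

open Limits TensorProduct LinearMap MonoidalCategory in
/-- If `A` is a noetherian commutative ring, `𝔞 ⊆ A` an ideal, and `M` an
`𝔞`-adically complete `A`-module which is `𝔞`-adically flat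
(`Tor_q^A(N, M) = 0` for every `𝔞`-torsion module `N` and every `q > 0`),
then `M` is a flat `A`-module. -/
theorem flat_of_adically_complete_adically_flat {A : Type u} [CommRing A]
    [IsNoetherianRing A] (𝔞 : Ideal A)
    (M : Type u) [AddCommGroup M] [Module A M]
    (hcomplete : IsAdicComplete 𝔞 M)
    (hflat : ∀ (N : Type u) [AddCommGroup N] [Module A N],
      (∀ x : N, ∃ k : ℕ, ∀ r ∈ 𝔞 ^ k, r • x = 0) →
      ∀ q : ℕ, 0 < q →
        Limits.IsZero (((Tor (ModuleCat.{u} A) q).obj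
          (ModuleCat.of A N)).obj (ModuleCat.of A M))) :
    Module.Flat A M := by
  rw [Module.Flat.iff_rTensor_injective']
  intro J
  rw [injective_iff_map_eq_zero]
  intro x hx
  -- generators of J
  obtain ⟨r, gJ, hgJ⟩ := Submodule.fg_iff_exists_fin_generating_family.1
    (IsNoetherian.noetherian (J : Submodule A A))
  have hgJmem : ∀ i, gJ i ∈ J := fun i => hgJ ▸ Submodule.subset_span ⟨i, rfl⟩
  -- Step A : x lies in 𝔞^m • (J ⊗ M) for every m
  obtain ⟨cJ, hcJ⟩ := Ideal.exists_pow_inf_eq_pow_smul 𝔞 (J : Submodule A A)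
  have stepA : ∀ m : ℕ, x ∈ (𝔞 ^ m • ⊤ : Submodule A ((↥J) ⊗[A] M)) := by
    intro m
    have hmem : rTensor M (Submodule.subtype (J : Submodule A A)) x ∈
        (𝔞 ^ (m + cJ) • ⊤ : Submodule A (A ⊗[A] M)) := by
      rw [hx]; exact zero_mem _
    obtain ⟨t, ht⟩ := mem_range_rTensor_inf 𝔞 hflat (J : Submodule A A) (m + cJ) hmem
    rw [← ht]
    refine range_rTensor_inclusion_le (D := (𝔞 ^ cJ • ⊤ : Submodule A A) ⊓ J) (𝔞 ^ m)
      inf_le_right ?_ inf_le_left t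
    rw [inf_comm (J : Submodule A A), hcJ (m + cJ) (by omega), Nat.add_sub_cancel]
  -- presentation of J
  set pJ : (Fin r → A) →ₗ[A] A := Fintype.linearCombination A gJ with hpJ
  have hpJval : ∀ a : Fin r → A, pJ a = ∑ i, a i • gJ i := fun a =>
    Fintype.linearCombination_apply (R := A) (v := gJ) a
  have hpJmem : ∀ a : Fin r → A, pJ a ∈ J := fun a => by
    rw [hpJval]; exact Submodule.sum_mem _ fun i _ => J.smul_mem _ (hgJmem i)
  set pJ' : (Fin r → A) →ₗ[A] ↥J := LinearMap.codRestrict (J : Submodule A A) pJ hpJmem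
    with hpJ'
  have hpJ'surj : Function.Surjective pJ' := by
    rintro ⟨a, ha⟩
    rw [← hgJ, Submodule.mem_span_range_iff_exists_fun] at ha
    obtain ⟨c, hc⟩ := ha
    exact ⟨c, Subtype.ext (by rw [LinearMap.codRestrict_apply, hpJval]; exact hc)⟩
  set 𝓛 : Submodule A (Fin r → A) := LinearMap.ker pJ with h𝓛
  have hexact_base : Function.Exact (Submodule.subtype 𝓛) pJ' := by
    rw [LinearMap.exact_iff, Submodule.range_subtype]
    rw [hpJ', LinearMap.ker_codRestrict]
  set τ : ((Fin r → A) ⊗[A] M) →ₗ[A] ((↥J) ⊗[A] M) := rTensor M pJ' with hτ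
  have hτsurj : Function.Surjective τ := rTensor_surjective M hpJ'surj
  have hexactτ : Function.Exact (rTensor M (Submodule.subtype 𝓛)) τ :=
    rTensor_exact M hexact_base hpJ'surj
  -- generators of 𝓛
  obtain ⟨s, gL, hgL⟩ := Submodule.fg_iff_exists_fin_generating_family.1
    (IsNoetherian.noetherian 𝓛)
  have hgLmem : ∀ j, gL j ∈ 𝓛 := fun j => hgL ▸ Submodule.subset_span ⟨j, rfl⟩
  set ρ : (Fin s → M) →ₗ[A] ((↥𝓛) ⊗[A] M) :=
    LinearMap.lsum A (fun _ : Fin s => M) A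
      (fun j => TensorProduct.mk A (↥𝓛) M ⟨gL j, hgLmem j⟩) with hρ
  have hρval : ∀ m : Fin s → M, ρ m = ∑ j, (⟨gL j, hgLmem j⟩ : ↥𝓛) ⊗ₜ[A] m j := by
    intro m
    simp [hρ, LinearMap.lsum_apply]
  have hρsurj : Function.Surjective ρ := by
    intro t
    induction t using TensorProduct.induction_on with
    | zero => exact ⟨0, map_zero _⟩
    | add a b ha hb =>
      obtain ⟨u, hu⟩ := ha; obtain ⟨v, hv⟩ := hb
      exact ⟨u + v, by rw [map_add, hu, hv]⟩
    | tmul l m =>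
      have hl : (l : Fin r → A) ∈ Submodule.span A (Set.range gL) := by rw [hgL]; exact l.2
      rw [Submodule.mem_span_range_iff_exists_fun] at hl
      obtain ⟨c, hc⟩ := hl
      refine ⟨fun j => c j • m, ?_⟩
      have hlsum : l = ∑ j, c j • (⟨gL j, hgLmem j⟩ : ↥𝓛) := by
        apply Subtype.ext
        push_cast
        rw [← hc]
      rw [hρval, hlsum, sum_tmul]
      congr 1
      funext j
      rw [smul_tmul]
  -- the isomorphism (Fin r → A) ⊗ M ≃ (Fin r → M)
  set e : ((Fin r → A) ⊗[A] M) ≃ₗ[A] (Fin r → M) :=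
    (TensorProduct.comm A (Fin r → A) M) ≪≫ₗ (TensorProduct.piScalarRight A A M (Fin r))
    with he
  set ψ : (Fin s → M) →ₗ[A] (Fin r → M) :=
    e.toLinearMap ∘ₗ (rTensor M (Submodule.subtype 𝓛)) ∘ₗ ρ with hψdef
  have h_rangeψ : LinearMap.range ψ =
      Submodule.map e.toLinearMap (LinearMap.range (rTensor M (Submodule.subtype 𝓛))) := by
    rw [hψdef, LinearMap.range_comp, LinearMap.range_comp, range_eq_top.2 hρsurj,
      Submodule.map_top]
  -- transfer of 𝔞-power submodules under e
  have hesmul : ∀ m : ℕ, Submodule.map e.toLinearMap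
      (𝔞 ^ m • ⊤ : Submodule A ((Fin r → A) ⊗[A] M)) = (𝔞 ^ m • ⊤ : Submodule A (Fin r → M)) := by
    intro m
    rw [Submodule.map_smul'', Submodule.map_top, LinearEquiv.range]
  -- pick a preimage y of x under τ
  obtain ⟨y, hy⟩ := hτsurj x
  -- Step B : e y is in the closure of range ψ
  have hey : ∀ m : ℕ, e y ∈
      (LinearMap.range ψ ⊔ (𝔞 ^ m • ⊤) : Submodule A (Fin r → M)) := by
    intro m
    have hmapτ : Submodule.map τ (𝔞 ^ m • ⊤ : Submodule A ((Fin r → A) ⊗[A] M)) =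
        (𝔞 ^ m • ⊤ : Submodule A ((↥J) ⊗[A] M)) := by
      rw [Submodule.map_smul'', Submodule.map_top, range_eq_top.2 hτsurj]
    have hxm := stepA m
    rw [← hmapτ] at hxm
    obtain ⟨z, hz, hzx⟩ := hxm
    have hker : τ (y - z) = 0 := by rw [map_sub, hy, hzx, sub_self]
    have hmem := (hexactτ (y - z)).1 hker
    have hy_mem : y ∈ (LinearMap.range (rTensor M (Submodule.subtype 𝓛)) ⊔
        (𝔞 ^ m • ⊤) : Submodule A ((Fin r → A) ⊗[A] M)) := by
      rw [Submodule.mem_sup]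
      obtain ⟨w, hw⟩ := hmem
      exact ⟨y - z, ⟨w, hw⟩, z, hz, by abel⟩
    have := Submodule.mem_map_of_mem (f := e.toLinearMap) hy_mem
    rw [Submodule.map_sup, hesmul, ← h_rangeψ] at this
    exact this
  -- Step C : the closedness hypothesis, via Artin-Rees for 𝓛
  obtain ⟨cL, hcL⟩ := Ideal.exists_pow_inf_eq_pow_smul 𝔞 𝓛
  have hψhyp : ∀ n : ℕ,
      (LinearMap.range ψ ⊓ (𝔞 ^ (n + cL) • ⊤) : Submodule A (Fin r → M)) ≤
        Submodule.map ψ (𝔞 ^ n • ⊤ : Submodule A (Fin s → M)) := by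
    intro n
    rintro w ⟨hw1, hw2⟩
    rw [hψdef] at hw1
    obtain ⟨mz, rfl⟩ := hw1
    set ℓ : (↥𝓛) ⊗[A] M := ρ mz with hℓ
    have hew : (e.toLinearMap ∘ₗ (rTensor M (Submodule.subtype 𝓛)) ∘ₗ ρ) mz =
        e (rTensor M (Submodule.subtype 𝓛) ℓ) := rfl
    have hwt : rTensor M (Submodule.subtype 𝓛) ℓ ∈
        (𝔞 ^ (n + cL) • ⊤ : Submodule A ((Fin r → A) ⊗[A] M)) := by
      have hsymm : Submodule.map e.symm.toLinearMap
          (𝔞 ^ (n + cL) • ⊤ : Submodule A (Fin r → M)) =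
          (𝔞 ^ (n + cL) • ⊤ : Submodule A ((Fin r → A) ⊗[A] M)) := by
        rw [Submodule.map_smul'', Submodule.map_top, LinearEquiv.range]
      rw [← hsymm]
      refine ⟨_, hw2, ?_⟩
      rw [hew]
      exact e.symm_apply_apply _
    obtain ⟨t, ht⟩ := mem_range_rTensor_inf 𝔞 hflat 𝓛 (n + cL) hwt
    have hℓmem : ℓ ∈ (𝔞 ^ n • ⊤ : Submodule A ((↥𝓛) ⊗[A] M)) := by
      rw [← ht]
      refine range_rTensor_inclusion_le
        (D := (𝔞 ^ cL • ⊤ : Submodule A (Fin r → A)) ⊓ 𝓛) (𝔞 ^ n)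
        inf_le_right ?_ inf_le_left t
      rw [inf_comm 𝓛, hcL (n + cL) (by omega), Nat.add_sub_cancel]
    have hρsmul : Submodule.map ρ (𝔞 ^ n • ⊤ : Submodule A (Fin s → M)) =
        (𝔞 ^ n • ⊤ : Submodule A ((↥𝓛) ⊗[A] M)) := by
      rw [Submodule.map_smul'', Submodule.map_top, range_eq_top.2 hρsurj]
    rw [← hρsmul] at hℓmem
    obtain ⟨m', hm', hm'eq⟩ := hℓmem
    refine ⟨m', hm', ?_⟩
    rw [hψdef]
    show e (rTensor M (Submodule.subtype 𝓛) (ρ m')) = _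
    rw [hm'eq, ← hew]
  -- conclude with completeness
  have hfin := closed_range 𝔞 hcomplete ψ cL hψhyp hey
  obtain ⟨m', hm'⟩ := hfin
  have hym : rTensor M (Submodule.subtype 𝓛) (ρ m') = y := by
    apply e.injective
    exact hm'
  have : τ (rTensor M (Submodule.subtype 𝓛) (ρ m')) = 0 :=
    hexactτ.apply_apply_eq_zero (ρ m')
  rw [hym, hy] at this
  exact this
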